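/- In a k-edge-connected graph with k odd, no two edge-cuts of size exactly k cross. That is, if δ(A) and δ(B) are both k-edge-cuts, then at least one of the four sets A∩B, A\B, B\A, and the complement of A∪B is empty. -/

import Mathlib

open Finset

/-- The edge-cut `δ(A)`: edges with exactly one endpoint in `A`. -/
def cutset {V E : Type} [Fintype E] [DecidableEq V] (fst snd : E → V) (A : Finset V) :
    Finset E :=
  univ.filter fun e => ¬ ((fst e ∈ A) ↔ (snd e ∈ A))

lemma cutset_card_eq_sum {V E : Type} [Fintype E] [DecidableEq V] (fst snd : E → V)
    (A : Finset V) :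
    (cutset fst snd A).card =
      ∑ e : E, if ¬ ((fst e ∈ A) ↔ (snd e ∈ A)) then 1 else 0 := by
  simp [cutset, Finset.card_filter]

lemma submod {V E : Type} [Fintype E] [DecidableEq V] (fst snd : E → V) (A B : Finset V) :
    (cutset fst snd (A ∩ B)).card + (cutset fst snd (A ∪ B)).card ≤
      (cutset fst snd A).card + (cutset fst snd B).card := by
  simp only [cutset_card_eq_sum, ← Finset.sum_add_distrib]
  apply Finset.sum_le_sum
  intro e _
  simp only [Finset.mem_inter, Finset.mem_union]
  by_cases h1 : fst e ∈ A <;> by_cases h2 : fst e ∈ B <;>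
    by_cases h3 : snd e ∈ A <;> by_cases h4 : snd e ∈ B <;> simp [h1, h2, h3, h4]

lemma submod' {V E : Type} [Fintype E] [DecidableEq V] (fst snd : E → V) (A B : Finset V) :
    (cutset fst snd (A \ B)).card + (cutset fst snd (B \ A)).card ≤
      (cutset fst snd A).card + (cutset fst snd B).card := by
  simp only [cutset_card_eq_sum, ← Finset.sum_add_distrib]
  apply Finset.sum_le_sum
  intro e _
  simp only [Finset.mem_sdiff]
  by_cases h1 : fst e ∈ A <;> by_cases h2 : fst e ∈ B <;>
    by_cases h3 : snd e ∈ A <;> by_cases h4 : snd e ∈ B <;> simp [h1, h2, h3, h4]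

lemma parity {V E : Type} [Fintype E] [DecidableEq V] (fst snd : E → V) (A B : Finset V) :
    Even ((cutset fst snd (A ∩ B)).card + (cutset fst snd (A \ B)).card +
      (cutset fst snd A).card) := by
  simp only [cutset_card_eq_sum, ← Finset.sum_add_distrib]
  apply Finset.even_sum
  intro e _
  simp only [Finset.mem_inter, Finset.mem_sdiff]
  by_cases h1 : fst e ∈ A <;> by_cases h2 : fst e ∈ B <;>
    by_cases h3 : snd e ∈ A <;> by_cases h4 : snd e ∈ B <;> simp [h1, h2, h3, h4]

/-- In a `k`-edge-connected graph with `k` odd, no two `k`-edge-cuts cross: if `δ(A)` and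
`δ(B)` both have size exactly `k`, then one of `A ∩ B`, `A \ B`, `B \ A`, `V \ (A ∪ B)`
is empty. -/
theorem stmt1 {V E : Type} [Fintype V] [Fintype E] [DecidableEq V]
    (fst snd : E → V) (k : ℕ) (hodd : Odd k) (hpos : 0 < k)
    (hconn : ∀ A : Finset V, A.Nonempty → A ≠ univ → k ≤ (cutset fst snd A).card)
    (A B : Finset V)
    (hA : (cutset fst snd A).card = k) (hB : (cutset fst snd B).card = k) :
    A ∩ B = ∅ ∨ A \ B = ∅ ∨ B \ A = ∅ ∨ univ \ (A ∪ B) = ∅ := by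
  by_contra h
  push_neg at h
  obtain ⟨h1, h2, h3, h4⟩ := h
  obtain ⟨x, hx⟩ := h4
  rw [Finset.mem_sdiff, Finset.mem_union] at hx
  push_neg at hx
  obtain ⟨y, hy⟩ := h3
  rw [Finset.mem_sdiff] at hy
  -- lower bounds
  have hP : k ≤ (cutset fst snd (A ∩ B)).card := by
    refine hconn _ h1 ?_
    intro hu
    have : x ∈ A ∩ B := hu ▸ Finset.mem_univ x
    rw [Finset.mem_inter] at this
    exact hx.2.1 this.1
  have hU : k ≤ (cutset fst snd (A ∪ B)).card := by
    refine hconn _ ?_ ?_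
    · obtain ⟨z, hz⟩ := h1
      exact ⟨z, Finset.mem_union_left _ (Finset.mem_inter.mp hz).1⟩
    · intro hu
      have : x ∈ A ∪ B := hu ▸ Finset.mem_univ x
      rw [Finset.mem_union] at this
      rcases this with h | h
      · exact hx.2.1 h
      · exact hx.2.2 h
  have hD1 : k ≤ (cutset fst snd (A \ B)).card := by
    refine hconn _ h2 ?_
    intro hu
    have : y ∈ A \ B := hu ▸ Finset.mem_univ y
    rw [Finset.mem_sdiff] at this
    exact hy.2 this.1
  have hD2 : k ≤ (cutset fst snd (B \ A)).card := by
    refine hconn _ ⟨y, Finset.mem_sdiff.mpr hy⟩ ?_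
    intro hu
    obtain ⟨z, hz⟩ := h2
    rw [Finset.mem_sdiff] at hz
    have : z ∈ B \ A := hu ▸ Finset.mem_univ z
    rw [Finset.mem_sdiff] at this
    exact this.2 hz.1
  have hs1 := submod fst snd A B
  have hs2 := submod' fst snd A B
  rw [hA, hB] at hs1 hs2
  have hPk : (cutset fst snd (A ∩ B)).card = k := by omega
  have hDk : (cutset fst snd (A \ B)).card = k := by omega
  have hpar := parity fst snd A B
  rw [hPk, hDk, hA] at hpar
  obtain ⟨m, hm⟩ := hodd
  obtain ⟨n, hn⟩ := hpar
  omega
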